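/- Let D be an n×n matrix over ℤ/2. Then there exists an upper-triangular n×n matrix V over ℤ/2 with all diagonal entries equal to 1 such that the matrix R = D·V is reduced, i.e., the nonzero columns of R have pairwise distinct lowest-one positions. (The standard persistence matrix-reduction algorithm, Algorithm 1, always succeeds.) -/

import Mathlib

/-- The `j`-th column of the matrix `R`. -/
def column {n : ℕ} (R : Matrix (Fin n) (Fin n) (ZMod 2)) (j : Fin n) : Fin n → ZMod 2 :=
  fun i => R i j

/-- `low v` is the largest index at which the vector `v` over `ℤ/2` is nonzero
(`⊥` if `v = 0`). -/
def low {n : ℕ} (v : Fin n → ZMod 2) : WithBot (Fin n) :=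
  (Finset.univ.filter (fun i => v i ≠ 0)).max

/-- `lowM R j` is the lowest-one position of the `j`-th column of `R`. -/
def lowM {n : ℕ} (R : Matrix (Fin n) (Fin n) (ZMod 2)) (j : Fin n) : WithBot (Fin n) :=
  low (column R j)

/-- A matrix over `ℤ/2` is reduced if its nonzero columns have pairwise distinct
lowest-one positions. -/
def ReducedMat {n : ℕ} (R : Matrix (Fin n) (Fin n) (ZMod 2)) : Prop :=
  ∀ j k : Fin n, j ≠ k → column R j ≠ 0 → column R k ≠ 0 → lowM R j ≠ lowM R k

/-- A matrix is upper-triangular with all diagonal entries equal to `1`. -/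
def IsUpperUnitriangular {n : ℕ} (V : Matrix (Fin n) (Fin n) (ZMod 2)) : Prop :=
  (∀ i j : Fin n, j < i → V i j = 0) ∧ ∀ i : Fin n, V i i = 1

namespace RedAux

variable {n : ℕ}

lemma low_eq_bot_iff (v : Fin n → ZMod 2) : low v = ⊥ ↔ v = 0 := by
  unfold low
  rw [Finset.max_eq_bot, Finset.filter_eq_empty_iff]
  constructor
  · intro h; funext i
    by_contra hi
    exact h (Finset.mem_univ i) hi
  · intro h i _
    simp [h]

lemma le_low {v : Fin n → ZMod 2} {i : Fin n} (h : v i ≠ 0) : (i : WithBot (Fin n)) ≤ low v :=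
  Finset.le_max (by simp [h])

lemma low_mem {v : Fin n → ZMod 2} {l : Fin n} (h : low v = (l : WithBot (Fin n))) :
    v l ≠ 0 := by
  have := Finset.mem_of_max h
  simpa using this

lemma eq_zero_of_low_lt {v : Fin n → ZMod 2} {l i : Fin n}
    (h : low v = (l : WithBot (Fin n))) (hi : l < i) : v i = 0 := by
  by_contra hvi
  have := le_low hvi
  rw [h] at this
  exact absurd (WithBot.coe_le_coe.mp this) (not_le.mpr hi)

lemma zmod2_ne_zero : ∀ {a : ZMod 2}, a ≠ 0 → a = 1 := by decide

lemma low_add_lt {v w : Fin n → ZMod 2} {l : Fin n}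
    (hv : low v = (l : WithBot (Fin n))) (hw : low w = (l : WithBot (Fin n))) :
    low (v + w) < (l : WithBot (Fin n)) := by
  have key : ∀ i, (v + w) i ≠ 0 → i < l := by
    intro i hi
    rcases lt_trichotomy i l with h | h | h
    · exact h
    · subst h
      exfalso
      apply hi
      have h1 := zmod2_ne_zero (low_mem hv)
      have h2 := zmod2_ne_zero (low_mem hw)
      show v i + w i = 0
      rw [h1, h2]; decide
    · exfalso
      apply hi
      show v i + w i = 0
      rw [eq_zero_of_low_lt hv h, eq_zero_of_low_lt hw h, add_zero]
  unfold low
  rcases Finset.eq_empty_or_nonempty (Finset.univ.filter (fun i => (v + w) i ≠ 0)) with h | h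
  · rw [h]; simp [WithBot.bot_lt_coe]
  · obtain ⟨m, hm⟩ := Finset.max_of_nonempty h
    rw [hm]
    have hmm := Finset.mem_of_max hm
    simp only [Finset.mem_filter] at hmm
    exact WithBot.coe_lt_coe.mpr (key m hmm.2)

/-- The value of a `WithBot (Fin n)` as a natural number. -/
def wb : WithBot (Fin n) → ℕ
  | ⊥ => 0
  | (i : Fin n) => (i : ℕ) + 1

lemma wb_le_of_lt {x : WithBot (Fin n)} {l : Fin n} (h : x < (l : WithBot (Fin n))) :
    wb x ≤ (l : ℕ) := by
  cases x with
  | bot => exact Nat.zero_le _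
  | coe i =>
    have : i < l := WithBot.coe_lt_coe.mp h
    exact Nat.succ_le_of_lt this

/-- Measure: sum of lows. -/
def μ (R : Matrix (Fin n) (Fin n) (ZMod 2)) : ℕ := ∑ j, wb (lowM R j)

lemma unitriangular_mul {A B : Matrix (Fin n) (Fin n) (ZMod 2)}
    (hA : IsUpperUnitriangular A) (hB : IsUpperUnitriangular B) :
    IsUpperUnitriangular (A * B) := by
  constructor
  · intro i j hji
    rw [Matrix.mul_apply]
    apply Finset.sum_eq_zero
    intro p _
    rcases lt_or_ge p i with h | h
    · rw [hA.1 i p h, zero_mul]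
    · have : j < p := lt_of_lt_of_le hji h
      rw [hB.1 p j this, mul_zero]
  · intro i
    rw [Matrix.mul_apply]
    rw [Finset.sum_eq_single i]
    · rw [hA.2, hB.2, one_mul]
    · intro p _ hp
      rcases lt_or_gt_of_ne hp with h | h
      · rw [hA.1 i p h, zero_mul]
      · rw [hB.1 p i h, mul_zero]
    · intro h; exact absurd (Finset.mem_univ i) h

lemma unitriangular_elem {j k : Fin n} (hjk : j < k) :
    IsUpperUnitriangular (1 + Matrix.single j k (1 : ZMod 2)) := by
  constructor
  · intro i j' hj'
    rw [Matrix.add_apply, Matrix.one_apply_ne (by rintro rfl; exact absurd hj' (lt_irrefl _)),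
      Matrix.single_apply_of_ne]
    · ring
    · rintro ⟨rfl, rfl⟩
      exact absurd (hj'.trans hjk) (lt_irrefl _)
  · intro i
    rw [Matrix.add_apply, Matrix.one_apply_eq, Matrix.single_apply_of_ne]
    · ring
    · rintro ⟨rfl, rfl⟩
      exact absurd hjk (lt_irrefl _)

lemma column_mul_elem (R : Matrix (Fin n) (Fin n) (ZMod 2)) (j k : Fin n) (m : Fin n) :
    column (R * (1 + Matrix.single j k (1 : ZMod 2))) m
      = if m = k then column R m + column R j else column R m := by
  funext i
  simp only [column, Matrix.mul_add, Matrix.mul_one, Matrix.add_apply]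
  by_cases h : m = k
  · subst h
    rw [Matrix.mul_single_apply_same, mul_one, if_pos rfl]
    simp [column, Pi.add_apply]
  · rw [Matrix.mul_single_apply_of_ne (c := 1) j k i m h R, if_neg h, add_zero]; rfl

lemma column_pos (R : Matrix (Fin n) (Fin n) (ZMod 2)) (j k : Fin n) :
    column (R * (1 + Matrix.single j k (1 : ZMod 2))) k = column R k + column R j := by
  rw [column_mul_elem, if_pos rfl]

lemma column_neg (R : Matrix (Fin n) (Fin n) (ZMod 2)) {j k m : Fin n} (h : m ≠ k) :
    column (R * (1 + Matrix.single j k (1 : ZMod 2))) m = column R m := by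
  rw [column_mul_elem, if_neg h]

/-- Main induction on the measure. -/
lemma key (D : Matrix (Fin n) (Fin n) (ZMod 2)) :
    ∀ N, ∀ V : Matrix (Fin n) (Fin n) (ZMod 2), IsUpperUnitriangular V → μ (D * V) ≤ N →
      ∃ V' : Matrix (Fin n) (Fin n) (ZMod 2), IsUpperUnitriangular V' ∧ ReducedMat (D * V') := by
  intro N
  induction N using Nat.strong_induction_on with
  | _ N ih =>
    intro V hV hμ
    by_cases hred : ReducedMat (D * V)
    · exact ⟨V, hV, hred⟩
    · -- extract a bad pair
      simp only [ReducedMat, not_forall] at hred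
      obtain ⟨j, k, hjk, hj, hk, heq⟩ := hred
      rw [not_not] at heq
      -- WLOG j < k
      wlog hlt : j < k generalizing j k
      · exact this k j (Ne.symm hjk) hk hj heq.symm
          ((Ne.symm hjk).lt_of_le (le_of_not_gt hlt))
      -- column k is nonzero, so its low is some l
      obtain ⟨l, hl⟩ : ∃ l : Fin n, lowM (D * V) k = (l : WithBot (Fin n)) := by
        cases hx : lowM (D * V) k with
        | bot => exact absurd ((low_eq_bot_iff _).mp hx) hk
        | coe l => exact ⟨l, rfl⟩
      set E := (1 : Matrix (Fin n) (Fin n) (ZMod 2)) + Matrix.single j k (1 : ZMod 2)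
        with hE
      have hVE : IsUpperUnitriangular (V * E) := unitriangular_mul hV (unitriangular_elem hlt)
      have hDVE : D * (V * E) = (D * V) * E := by rw [Matrix.mul_assoc]
      -- new low of column k is < l
      have hnewk : lowM (D * (V * E)) k < (l : WithBot (Fin n)) := by
        rw [hDVE]
        show low (column ((D * V) * E) k) < _
        rw [column_pos]
        exact low_add_lt hl (heq.trans hl)
      -- other columns unchanged
      have hother : ∀ m : Fin n, m ≠ k → lowM (D * (V * E)) m = lowM (D * V) m := by
        intro m hm
        rw [hDVE]
        show low (column ((D * V) * E) m) = _
        rw [column_neg _ hm]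
        rfl
      -- measure strictly decreases
      have hmeas : μ (D * (V * E)) < μ (D * V) := by
        unfold μ
        refine Finset.sum_lt_sum ?_ ⟨k, Finset.mem_univ k, ?_⟩
        · intro m _
          by_cases hm : m = k
          · subst hm
            rw [hl]
            exact le_trans (wb_le_of_lt hnewk) (Nat.le_succ_of_le (Nat.le_refl _))
          · rw [hother m hm]
        · rw [hl]
          exact Nat.lt_succ_of_le (wb_le_of_lt hnewk)
      cases N with
      | zero => omega
      | succ N =>
        exact ih (μ (D * (V * E))) (lt_of_lt_of_le hmeas hμ) (V * E) hVE (Nat.le_refl _)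

end RedAux

/-- The standard persistence matrix-reduction algorithm always succeeds: every square
matrix `D` over `ℤ/2` admits an upper-triangular matrix `V` with unit diagonal such
that `R = D·V` is reduced. -/
theorem exists_reduction {n : ℕ} (D : Matrix (Fin n) (Fin n) (ZMod 2)) :
    ∃ V : Matrix (Fin n) (Fin n) (ZMod 2),
      IsUpperUnitriangular V ∧ ReducedMat (D * V) := by
  have h1 : IsUpperUnitriangular (1 : Matrix (Fin n) (Fin n) (ZMod 2)) := by
    constructor
    · intro i j hji
      exact Matrix.one_apply_ne (by rintro rfl; exact absurd hji (lt_irrefl _))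
    · intro i; exact Matrix.one_apply_eq i
  exact RedAux.key D (RedAux.μ (D * 1)) 1 h1 (Nat.le_refl _)
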